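/- arXiv:2003.11286 — 3 statements merged into one kernel-verified Lean document; each statement's English description precedes it below -/
import Mathlib

section
/- Let K be a field, let W : ℤ² → K be an elliptic net, and let c ∈ K be nonzero. Then the modified map W⁽¹⁾ : ℤ² → K defined by W⁽¹⁾(u,v) = c^{uv}·W(u,v) (with c^{uv} the integer power of c, uv ∈ ℤ possibly negative) is again an elliptic net, i.e. it satisfies the same four-term recurrence. -/
/-- An elliptic net of rank 2: a map `W : ℤ² → K` satisfying the four-term recurrence. -/
def IsEllipticNetRank2 {K : Type*} [CommRing K] (W : ℤ × ℤ → K) : Prop :=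
  ∀ p q r s : ℤ × ℤ,
    W (p + q + s) * W (p - q) * W (r + s) * W r +
      W (q + r + s) * W (q - r) * W (p + s) * W p +
        W (r + p + s) * W (r - p) * W (q + s) * W q = 0

private lemma comb4 {K : Type*} [Field K] {c : K} (hc : c ≠ 0) (a b d e : ℤ)
    (A B C D : K) :
    (c ^ a * A) * (c ^ b * B) * (c ^ d * C) * (c ^ e * D)
      = c ^ (a + b + d + e) * (A * B * C * D) := by
  rw [zpow_add₀ hc, zpow_add₀ hc, zpow_add₀ hc]; ring

theorem ellipticNet_modified {K : Type*} [Field K]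
    (W : ℤ × ℤ → K) (hW : IsEllipticNetRank2 W) (c : K) (hc : c ≠ 0) :
    IsEllipticNetRank2 (fun uv : ℤ × ℤ => c ^ (uv.1 * uv.2) * W uv) := by
  intro p q r s
  have h := hW p q r s
  simp only
  rw [comb4 hc, comb4 hc, comb4 hc]
  have E := 2 * (p.1 * p.2 + q.1 * q.2 + r.1 * r.2 + s.1 * s.2) +
      (p.1 * s.2 + p.2 * s.1 + q.1 * s.2 + q.2 * s.1 + r.1 * s.2 + r.2 * s.1)
  have h1 : (p + q + s).1 * (p + q + s).2 + (p - q).1 * (p - q).2 +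
      (r + s).1 * (r + s).2 + r.1 * r.2 =
      2 * (p.1 * p.2 + q.1 * q.2 + r.1 * r.2 + s.1 * s.2) +
      (p.1 * s.2 + p.2 * s.1 + q.1 * s.2 + q.2 * s.1 + r.1 * s.2 + r.2 * s.1) := by
    simp [Prod.fst_add, Prod.snd_add, Prod.fst_sub, Prod.snd_sub]; ring
  have h2 : (q + r + s).1 * (q + r + s).2 + (q - r).1 * (q - r).2 +
      (p + s).1 * (p + s).2 + p.1 * p.2 =
      2 * (p.1 * p.2 + q.1 * q.2 + r.1 * r.2 + s.1 * s.2) +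
      (p.1 * s.2 + p.2 * s.1 + q.1 * s.2 + q.2 * s.1 + r.1 * s.2 + r.2 * s.1) := by
    simp [Prod.fst_add, Prod.snd_add, Prod.fst_sub, Prod.snd_sub]; ring
  have h3 : (r + p + s).1 * (r + p + s).2 + (r - p).1 * (r - p).2 +
      (q + s).1 * (q + s).2 + q.1 * q.2 =
      2 * (p.1 * p.2 + q.1 * q.2 + r.1 * r.2 + s.1 * s.2) +
      (p.1 * s.2 + p.2 * s.1 + q.1 * s.2 + q.2 * s.1 + r.1 * s.2 + r.2 * s.1) := by
    simp [Prod.fst_add, Prod.snd_add, Prod.fst_sub, Prod.snd_sub]; ring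
  rw [h1, h2, h3, ← mul_add, ← mul_add, h, mul_zero]
end

section
/- Let K be a field, let W : ℤ² → K be an elliptic net, let θ ∈ K be nonzero, and let a, b, c, d ∈ ℤ. Then the map W' : ℤ² → K defined by W'(u,v) = θ^{a·u² + b·uv + c·v² + d}·W(u,v) (integer powers of θ, possibly negative) is again an elliptic net, i.e. it satisfies the same four-term recurrence. -/
/-- An elliptic net of rank 2: a map `W : ℤ² → K` satisfying the four-term recurrence. -/
def IsEllipticNetRankTwo {K : Type*} [CommRing K] (W : ℤ × ℤ → K) : Prop :=
  ∀ p q r s : ℤ × ℤ,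
    W (p + q + s) * W (p - q) * W (r + s) * W r +
      W (q + r + s) * W (q - r) * W (p + s) * W p +
        W (r + p + s) * W (r - p) * W (q + s) * W q = 0

theorem ellipticNet_scale_quadratic {K : Type*} [Field K]
    (W : ℤ × ℤ → K) (hW : IsEllipticNetRankTwo W) (θ : K) (hθ : θ ≠ 0)
    (a b c d : ℤ) :
    IsEllipticNetRankTwo (fun uv : ℤ × ℤ =>
      θ ^ (a * uv.1 ^ 2 + b * uv.1 * uv.2 + c * uv.2 ^ 2 + d) * W uv) := by
  intro p q r s
  simp only
  set f : ℤ × ℤ → ℤ := fun uv => a * uv.1 ^ 2 + b * uv.1 * uv.2 + c * uv.2 ^ 2 + d with hf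
  have key : ∀ (n1 n2 n3 n4 : ℤ) (x1 x2 x3 x4 : ℤ × ℤ),
      (θ ^ n1 * W x1) * (θ ^ n2 * W x2) * (θ ^ n3 * W x3) * (θ ^ n4 * W x4)
        = θ ^ (n1 + n2 + n3 + n4) * (W x1 * W x2 * W x3 * W x4) := by
    intro n1 n2 n3 n4 x1 x2 x3 x4
    rw [zpow_add₀ hθ, zpow_add₀ hθ, zpow_add₀ hθ]
    generalize θ ^ n1 = t1
    generalize θ ^ n2 = t2
    generalize θ ^ n3 = t3
    generalize θ ^ n4 = t4
    ring
  rw [key (f (p+q+s)) (f (p-q)) (f (r+s)) (f r),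
      key (f (q+r+s)) (f (q-r)) (f (p+s)) (f p),
      key (f (r+p+s)) (f (r-p)) (f (q+s)) (f q)]
  have e1 : f (q + r + s) + f (q - r) + f (p + s) + f p
      = f (p + q + s) + f (p - q) + f (r + s) + f r := by
    simp only [hf, Prod.fst_add, Prod.snd_add, Prod.fst_sub, Prod.snd_sub]
    ring
  have e2 : f (r + p + s) + f (r - p) + f (q + s) + f q
      = f (p + q + s) + f (p - q) + f (r + s) + f r := by
    simp only [hf, Prod.fst_add, Prod.snd_add, Prod.fst_sub, Prod.snd_sub]
    ring
  rw [e1, e2, ← mul_add, ← mul_add, hW p q r s, mul_zero]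
end

section
/- Let K be a field, let W̃ : ℤ² → K be an elliptic net, and let θ ∈ K be nonzero. Define W : ℤ² → K by W(n,m) = θ^{nm − n² − m² + 1}·W̃(n,m) (integer powers of θ, possibly negative). Then W is an elliptic net, and it satisfies W(n,0) = θ^{1−n²}·W̃(n,0) and W(n,1) = θ^{n−n²}·W̃(n,1) for all n ∈ ℤ. -/
/-- The twisting exponent. -/
def twistExp (v : ℤ × ℤ) : ℤ := v.1 * v.2 - v.1 ^ 2 - v.2 ^ 2 + 1

lemma twistExp_cyc (p q r s : ℤ × ℤ) :
    twistExp (q + r + s) + twistExp (q - r) + twistExp (p + s) + twistExp p =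
      twistExp (p + q + s) + twistExp (p - q) + twistExp (r + s) + twistExp r := by
  obtain ⟨a, b⟩ := p; obtain ⟨c, d⟩ := q; obtain ⟨e, f⟩ := r; obtain ⟨g, h⟩ := s
  simp only [twistExp, Prod.mk_add_mk, Prod.mk_sub_mk]
  ring

lemma aux_mul {K : Type*} [Field K] (θ : K) (hθ : θ ≠ 0) (e1 e2 e3 e4 : ℤ)
    (x1 x2 x3 x4 : K) :
    θ ^ e1 * x1 * (θ ^ e2 * x2) * (θ ^ e3 * x3) * (θ ^ e4 * x4) =
      θ ^ (e1 + e2 + e3 + e4) * (x1 * x2 * x3 * x4) := by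
  rw [zpow_add₀ hθ, zpow_add₀ hθ, zpow_add₀ hθ]; ring

theorem ellipticNet_twist {K : Type*} [Field K]
    (Wt : ℤ × ℤ → K) (hWt : IsEllipticNetRankTwo Wt) (θ : K) (hθ : θ ≠ 0)
    (W : ℤ × ℤ → K)
    (hW : ∀ n m : ℤ, W (n, m) = θ ^ (n * m - n ^ 2 - m ^ 2 + 1) * Wt (n, m)) :
    IsEllipticNetRankTwo W ∧
      (∀ n : ℤ, W (n, 0) = θ ^ (1 - n ^ 2) * Wt (n, 0)) ∧
        (∀ n : ℤ, W (n, 1) = θ ^ (n - n ^ 2) * Wt (n, 1)) := by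
  have hW' : ∀ v : ℤ × ℤ, W v = θ ^ (twistExp v) * Wt v := by
    rintro ⟨n, m⟩; exact hW n m
  refine ⟨?_, ?_, ?_⟩
  · intro p q r s
    have key := hWt p q r s
    simp only [hW']
    rw [aux_mul θ hθ, aux_mul θ hθ, aux_mul θ hθ, twistExp_cyc q r p s,
      twistExp_cyc p q r s, ← mul_add, ← mul_add, key, mul_zero]
  · intro n
    have h1 : n * 0 - n ^ 2 - 0 ^ 2 + 1 = 1 - n ^ 2 := by ring
    rw [hW, h1]
  · intro n
    have h1 : n * 1 - n ^ 2 - 1 ^ 2 + 1 = n - n ^ 2 := by ring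
    rw [hW, h1]
end
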